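/- Let {S_f, P_v} be a Toeplitz–Cuntz–Krieger E-family on a Hilbert space H, and let v be a vertex. Then the closed two-sided ideal of C*(S,P) generated by P_v equals the closed linear span of {S_μ S_τ* : μ, τ paths with r(μ) = r(τ) ∈ H(v)}. -/

import Mathlib

/-- `IsPathFrom r s v l` : the list of edges `l` is a (possibly empty) path starting at the
vertex `v`: consecutive edges are composable, and the first edge (if any) has source `v`.
The empty list represents the trivial path at `v`. -/
def IsPathFrom {V Ed : Type*} (r s : Ed → V) (v : V) (l : List Ed) : Prop :=
  l.Chain' (fun e f => r e = s f) ∧ ∀ e ∈ l.head?, s e = v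

/-- The range vertex of the path `(v, l)`: `v` if `l` is empty, and the range of the last
edge otherwise. -/
def pathEnd {V Ed : Type*} (r : Ed → V) (v : V) (l : List Ed) : V :=
  (l.getLast?).elim v r

/-- `S_μ` for the path `μ = (v, l)` : the product `S_{f₁} ⋯ S_{f_n}` of the edge operators,
and `P_v` for the trivial path at `v`. -/
def sPath {V Ed α : Type*} [Monoid α] (P : V → α) (S : Ed → α) (v : V) (l : List Ed) : α :=
  match l with
  | [] => P v
  | l => (l.map S).prod

/-- A Toeplitz–Cuntz–Krieger `E`-family on a Hilbert space `H`, for the directed graph with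
vertices `V`, edges `Ed` and range and source maps `r s : Ed → V`. -/
def IsTCKFamily {V Ed : Type*} {H : Type*} [NormedAddCommGroup H] [InnerProductSpace ℂ H]
    [CompleteSpace H] (r s : Ed → V) (P : V → (H →L[ℂ] H)) (S : Ed → (H →L[ℂ] H)) : Prop :=
  (∀ v, IsSelfAdjoint (P v)) ∧ (∀ v, IsIdempotentElem (P v)) ∧
  (∀ v w, v ≠ w → P v * P w = 0) ∧
  (∀ f, star (S f) * S f = P (r f)) ∧
  (∀ e f, e ≠ f → (S e * star (S e)) * (S f * star (S f)) = 0) ∧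
  (∀ (v : V) (F : Finset Ed), (∀ f ∈ F, s f = v) → (∑ f ∈ F, S f * star (S f)) ≤ P v)

section PathLemmas
variable {V Ed : Type*} {r s : Ed → V}

theorem pathEnd_cons (f : Ed) (l : List Ed) (w : V) :
    pathEnd r w (f :: l) = pathEnd r (r f) l := by
  cases l with
  | nil => rfl
  | cons g t =>
      show pathEnd r w (f :: g :: t) = _
      unfold pathEnd
      rw [List.getLast?_cons_cons, List.getLast?_eq_getLast (l := g :: t) (by simp)]
      rfl

theorem pathEnd_append_edge (w : V) (l : List Ed) (f : Ed) :
    pathEnd r w (l ++ [f]) = r f := by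
  unfold pathEnd
  rw [List.getLast?_append_cons]
  rfl

theorem isPathFrom_cons {w : V} {f : Ed} {l : List Ed} :
    IsPathFrom r s w (f :: l) ↔ s f = w ∧ IsPathFrom r s (r f) l := by
  constructor
  · rintro ⟨hc, hh⟩
    replace hc := List.isChain_cons.1 hc
    exact ⟨hh f rfl, hc.2, fun e he => (hc.1 e he).symm⟩
  · rintro ⟨hf, hc, hh⟩
    refine ⟨List.isChain_cons.2 ⟨fun y hy => (hh y hy).symm, hc⟩, ?_⟩
    simpa using hf

theorem isPathFrom_append_edge {w : V} {l : List Ed} {f : Ed}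
    (h : IsPathFrom r s w l) (he : pathEnd r w l = s f) :
    IsPathFrom r s w (l ++ [f]) := by
  induction l generalizing w with
  | nil =>
      simp only [List.nil_append]
      rw [isPathFrom_cons]
      refine ⟨?_, List.isChain_nil, by simp⟩
      simpa [pathEnd] using he.symm
  | cons a t ih =>
      rw [List.cons_append, isPathFrom_cons]
      rw [isPathFrom_cons] at h
      rw [pathEnd_cons] at he
      exact ⟨h.1, ih h.2 he⟩

end PathLemmas

section OpLemmas
variable {V Ed : Type*} {H : Type*} [NormedAddCommGroup H] [InnerProductSpace ℂ H]
  [CompleteSpace H] {r s : Ed → V} {P : V → (H →L[ℂ] H)} {S : Ed → (H →L[ℂ] H)}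

theorem proj_absorb {e p : H →L[ℂ] H} (he : IsSelfAdjoint e) (he2 : IsIdempotentElem e)
    (hp : IsSelfAdjoint p) (hp2 : IsIdempotentElem p) (hle : e ≤ p) : p * e = e := by
  have hq : IsSelfAdjoint (1 - p) := (IsSelfAdjoint.one (R:=H →L[ℂ] H)).sub hp
  have key : ((1 - p) * e) * star ((1 - p) * e) = 0 := by
    have h1 : ((1 - p) * e) * star ((1 - p) * e) = (1 - p) * e * (1 - p) := by
      rw [star_mul, he.star_eq, hq.star_eq, mul_assoc, mul_assoc, ← mul_assoc e e, he2.eq]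
    have h2 : (1 - p) * e * (1 - p) ≤ (1 - p) * p * (1 - p) :=
      hq.conjugate_le_conjugate hle
    have h3 : (1 - p) * p * (1 - p) = 0 := by
      rw [sub_mul, one_mul, mul_sub, mul_one, hp2.eq]; simp
    have h4 : (0 : H →L[ℂ] H) ≤ (1 - p) * e * (1 - p) := by
      have hpos : (0 : H →L[ℂ] H) ≤ e := by
        rw [← he2.eq]; nth_rewrite 1 [← he.star_eq]; exact star_mul_self_nonneg e
      exact hq.conjugate_nonneg hpos
    rw [h1]
    exact le_antisymm (h3 ▸ h2) h4
  have h5 := (CStarRing.mul_star_self_eq_zero_iff ((1 - p) * e)).mp key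
  rw [sub_mul, one_mul, sub_eq_zero] at h5
  exact h5.symm

variable (h : IsTCKFamily r s P S)
include h

theorem S_mul_Pr (f : Ed) : S f * P (r f) = S f := by
  obtain ⟨h1, h2, h3, h4, h5, h6⟩ := h
  set p := P (r f) with hpdef
  have hpsa : IsSelfAdjoint p := h1 _
  have hpid : IsIdempotentElem p := h2 _
  have key : star (S f * p - S f) * (S f * p - S f) = 0 := by
    have expand : star (S f * p - S f) * (S f * p - S f) =
        p * (star (S f) * S f) * p - p * (star (S f) * S f)
          - (star (S f) * S f) * p + star (S f) * S f := by
      rw [star_sub, star_mul, hpsa.star_eq]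
      noncomm_ring
    rw [expand, h4, ← hpdef, hpid.eq, hpid.eq]
    abel
  have h7 := (CStarRing.star_mul_self_eq_zero_iff (S f * p - S f)).mp key
  rw [sub_eq_zero] at h7
  exact h7

theorem S_starS_S (f : Ed) : S f * star (S f) * S f = S f := by
  rw [mul_assoc, h.2.2.2.1 f, S_mul_Pr h]

theorem Ps_mul_S (f : Ed) : P (s f) * S f = S f := by
  have hesa : IsSelfAdjoint (S f * star (S f)) := by
    rw [IsSelfAdjoint, star_mul, star_star]
  have heid : IsIdempotentElem (S f * star (S f)) := by
    rw [IsIdempotentElem, mul_assoc, ← mul_assoc (star (S f)), h.2.2.2.1 f, ← mul_assoc,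
      S_mul_Pr h]
  have hle : S f * star (S f) ≤ P (s f) := by
    simpa using h.2.2.2.2.2 (s f) {f} (by simp)
  have habs : P (s f) * (S f * star (S f)) = S f * star (S f) :=
    proj_absorb hesa heid (h.1 _) (h.2.1 _) hle
  conv_lhs => rw [← S_starS_S h f]
  rw [← mul_assoc, habs, S_starS_S h f]

theorem Pu_mul_S {u : V} (f : Ed) (hne : u ≠ s f) : P u * S f = 0 := by
  rw [← Ps_mul_S h f, ← mul_assoc, h.2.2.1 u (s f) hne, zero_mul]

theorem starS_mul_S {e f : Ed} (hne : e ≠ f) : star (S e) * S f = 0 := by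
  obtain ⟨h1, h2, h3, h4, h5, h6⟩ := id h
  have hb : star (S e) * (((S f * star (S f)) * (S e * star (S e))) * S e) =
      (star (S e) * S f) * star (star (S e) * S f) := by
    rw [mul_assoc (S f * star (S f)), S_starS_S h]
    rw [star_mul, star_star]
    simp only [mul_assoc]
  have h0 : (star (S e) * S f) * star (star (S e) * S f) = 0 := by
    rw [← hb, h5 f e hne.symm, zero_mul, mul_zero]
  exact (CStarRing.mul_star_self_eq_zero_iff _).mp h0

theorem sPath_cons (w : V) (f : Ed) (l : List Ed) :
    sPath P S w (f :: l) = S f * sPath P S (r f) l := by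
  cases l with
  | nil =>
      show (List.map S [f]).prod = S f * P (r f)
      rw [S_mul_Pr h]
      simp
  | cons g t =>
      show (List.map S (f :: g :: t)).prod = S f * (List.map S (g :: t)).prod
      rw [List.map_cons, List.prod_cons]

theorem sPath_append (w : V) (l : List Ed) (f : Ed) (he : pathEnd r w l = s f) :
    sPath P S w (l ++ [f]) = sPath P S w l * S f := by
  induction l generalizing w with
  | nil =>
      have hw : w = s f := by simpa [pathEnd] using he
      show (List.map S [f]).prod = P w * S f
      rw [hw, Ps_mul_S h]
      simp
  | cons a tl ih =>
      rw [List.cons_append, sPath_cons h, sPath_cons h,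
        ih (r a) (by rwa [pathEnd_cons] at he), mul_assoc]

theorem P_mul_sPath {w : V} {l : List Ed} (hl : IsPathFrom r s w l) :
    P w * sPath P S w l = sPath P S w l := by
  cases l with
  | nil => exact (h.2.1 w).eq
  | cons f tl =>
      rw [isPathFrom_cons] at hl
      rw [sPath_cons h, ← mul_assoc, ← hl.1, Ps_mul_S h]

theorem P_mul_sPath_ne {u w : V} {l : List Ed} (hl : IsPathFrom r s w l) (hne : u ≠ w) :
    P u * sPath P S w l = 0 := by
  cases l with
  | nil => exact h.2.2.1 u w hne
  | cons f tl =>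
      rw [isPathFrom_cons] at hl
      rw [sPath_cons h, ← mul_assoc, Pu_mul_S h f (hl.1 ▸ hne), zero_mul]

theorem sPath_mul_Pend {w : V} {l : List Ed} (hl : IsPathFrom r s w l) :
    sPath P S w l * P (pathEnd r w l) = sPath P S w l := by
  induction l generalizing w with
  | nil => exact (h.2.1 w).eq
  | cons f tl ih =>
      rw [isPathFrom_cons] at hl
      rw [sPath_cons h, pathEnd_cons, mul_assoc, ih hl.2, ← sPath_cons h w f tl]

theorem star_sPath_mul_sPath {w : V} {l : List Ed} (hl : IsPathFrom r s w l) :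
    star (sPath P S w l) * sPath P S w l = P (pathEnd r w l) := by
  induction l generalizing w with
  | nil =>
      show star (P w) * P w = P (pathEnd r w [])
      rw [(h.1 w).star_eq, (h.2.1 w).eq]
      rfl
  | cons f tl ih =>
      rw [isPathFrom_cons] at hl
      rw [sPath_cons h, pathEnd_cons, star_mul, mul_assoc, ← mul_assoc (star (S f)),
        h.2.2.2.1 f, P_mul_sPath h hl.2, ih hl.2]

theorem S_mul_sPath_eq {w : V} {l : List Ed} (f : Ed) (hl : IsPathFrom r s w l)
    (hc : r f = w) :
    S f * sPath P S w l = sPath P S (s f) (f :: l) := by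
  rw [sPath_cons h, hc]

theorem S_mul_sPath_ne {w : V} {l : List Ed} (f : Ed) (hl : IsPathFrom r s w l)
    (hc : r f ≠ w) :
    S f * sPath P S w l = 0 := by
  rw [← S_mul_Pr h f, mul_assoc, P_mul_sPath_ne h hl hc, mul_zero]

theorem sPath_mem {A : NonUnitalStarSubalgebra ℂ (H →L[ℂ] H)}
    (hS : ∀ f, S f ∈ A) (hP : ∀ v, P v ∈ A) (w : V) (l : List Ed) :
    sPath P S w l ∈ A := by
  induction l generalizing w with
  | nil => exact hP w
  | cons f tl ih => rw [sPath_cons h]; exact mul_mem (hS f) (ih (r f))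

end OpLemmas


set_option maxHeartbeats 2000000 in
/-- Let `{S_f, P_v}` be a Toeplitz–Cuntz–Krieger `E`-family on `H` and `v` a vertex.  Inside
`C*(S, P)` (the smallest norm-closed *-subalgebra of `B(H)` containing the family), the
closed two-sided ideal generated by `P_v` (the closure of the algebraic two-sided ideal it
generates) equals the closed linear span of
`{S_μ S_τ* : μ, τ paths with r(μ) = r(τ) ∈ H(v)}`, where `H(v)` is the set of vertices
reachable from `v` by a (possibly trivial) path. -/
theorem ideal_generated_by_Pv
    {V Ed : Type*} {H : Type*} [NormedAddCommGroup H] [InnerProductSpace ℂ H]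
    [CompleteSpace H]
    {r s : Ed → V} {P : V → (H →L[ℂ] H)} {S : Ed → (H →L[ℂ] H)}
    (hTCK : IsTCKFamily r s P S) (v : V)
    (pv : (NonUnitalStarAlgebra.adjoin ℂ (Set.range S ∪ Set.range P)).topologicalClosure)
    (hpv : (pv : H →L[ℂ] H) = P v) :
    closure ((TwoSidedIdeal.span {pv} : TwoSidedIdeal
        ((NonUnitalStarAlgebra.adjoin ℂ (Set.range S ∪ Set.range P)).topologicalClosure)) :
      Set ((NonUnitalStarAlgebra.adjoin ℂ (Set.range S ∪ Set.range P)).topologicalClosure)) =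
    closure ((Submodule.span ℂ
        {x : (NonUnitalStarAlgebra.adjoin ℂ (Set.range S ∪ Set.range P)).topologicalClosure |
          ∃ (vμ : V) (lμ : List Ed) (vτ : V) (lτ : List Ed),
            IsPathFrom r s vμ lμ ∧ IsPathFrom r s vτ lτ ∧
            pathEnd r vμ lμ = pathEnd r vτ lτ ∧
            (∃ l : List Ed, IsPathFrom r s v l ∧ pathEnd r v l = pathEnd r vμ lμ) ∧
            (x : H →L[ℂ] H) = sPath P S vμ lμ * star (sPath P S vτ lτ)}) :
      Set ((NonUnitalStarAlgebra.adjoin ℂ (Set.range S ∪ Set.range P)).topologicalClosure)) := by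
  obtain ⟨h1, h2, h3, h4, h5, h6⟩ := id hTCK
  revert hpv
  revert pv
  set A := NonUnitalStarAlgebra.adjoin ℂ (Set.range S ∪ Set.range P) with hAdef
  intro pv hpv
  have hSA : ∀ f, S f ∈ A := fun f =>
    NonUnitalStarAlgebra.subset_adjoin ℂ _ (Or.inl ⟨f, rfl⟩)
  have hPA : ∀ u, P u ∈ A := fun u =>
    NonUnitalStarAlgebra.subset_adjoin ℂ _ (Or.inr ⟨u, rfl⟩)
  have hle : A ≤ A.topologicalClosure := NonUnitalStarSubalgebra.le_topologicalClosure A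
  set X := {x : A.topologicalClosure |
      ∃ (vμ : V) (lμ : List Ed) (vτ : V) (lτ : List Ed),
        IsPathFrom r s vμ lμ ∧ IsPathFrom r s vτ lτ ∧
        pathEnd r vμ lμ = pathEnd r vτ lτ ∧
        (∃ l : List Ed, IsPathFrom r s v l ∧ pathEnd r v l = pathEnd r vμ lμ) ∧
        (x : H →L[ℂ] H) = sPath P S vμ lμ * star (sPath P S vτ lτ)} with hXdef
  set W := Submodule.span ℂ X with hWdef
  -- basic coercion facts
  have cstar : ∀ y : A.topologicalClosure,
      ((star y : A.topologicalClosure) : H →L[ℂ] H) = star (y : H →L[ℂ] H) := fun y => rfl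
  have cmul : ∀ y z : A.topologicalClosure,
      ((y * z : A.topologicalClosure) : H →L[ℂ] H) = (y : H →L[ℂ] H) * z := fun y z => rfl
  have eq0 : ∀ y : A.topologicalClosure, (y : H →L[ℂ] H) = 0 → y = 0 := fun y hy =>
    Subtype.ext hy
  have memX : ∀ (x : A.topologicalClosure) (vμ : V) (lμ : List Ed) (vτ : V) (lτ : List Ed),
      IsPathFrom r s vμ lμ → IsPathFrom r s vτ lτ →
      pathEnd r vμ lμ = pathEnd r vτ lτ →
      (∃ l : List Ed, IsPathFrom r s v l ∧ pathEnd r v l = pathEnd r vμ lμ) →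
      (x : H →L[ℂ] H) = sPath P S vμ lμ * star (sPath P S vτ lτ) → x ∈ X := by
    intro x vμ lμ vτ lτ hμ hτ hend hreach hx
    exact ⟨vμ, lμ, vτ, lτ, hμ, hτ, hend, hreach, hx⟩
  -- X is star-closed
  have hXstar : ∀ x ∈ X, star x ∈ X := by
    rintro x ⟨vμ, lμ, vτ, lτ, hμ, hτ, hend, ⟨l, hlp, hlend⟩, hx⟩
    refine memX _ vτ lτ vμ lμ hτ hμ hend.symm ⟨l, hlp, hlend.trans hend⟩ ?_
    rw [cstar, hx, star_mul, star_star]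
  have hWstar : ∀ x ∈ W, star x ∈ W := by
    intro x hx
    induction hx using Submodule.span_induction with
    | mem y hy => exact Submodule.subset_span (hXstar y hy)
    | zero => rw [star_zero]; exact W.zero_mem
    | add y z _ _ ihy ihz => rw [star_add]; exact W.add_mem ihy ihz
    | smul c y _ ih => rw [star_smul]; exact W.smul_mem _ ih
  -- generator multiplication
  have hGmulX : ∀ t : A.topologicalClosure,
      ((∃ f, (t : H →L[ℂ] H) = S f) ∨ (∃ f, (t : H →L[ℂ] H) = star (S f)) ∨
        (∃ u, (t : H →L[ℂ] H) = P u)) →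
      ∀ x ∈ X, t * x ∈ W := by
    rintro t ht x ⟨vμ, lμ, vτ, lτ, hμ, hτ, hend, ⟨l, hlp, hlend⟩, hx⟩
    obtain ⟨f, hf⟩ | ⟨f, hf⟩ | ⟨u, hu⟩ := ht
    · -- t = S f
      by_cases hc : r f = vμ
      · apply Submodule.subset_span
        refine memX _ (s f) (f :: lμ) vτ lτ (isPathFrom_cons.2 ⟨rfl, hc ▸ hμ⟩) hτ ?_
          ⟨l, hlp, ?_⟩ ?_
        · rw [pathEnd_cons, hc]; exact hend
        · rw [pathEnd_cons, hc]; exact hlend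
        · rw [cmul, hf, hx, ← mul_assoc, S_mul_sPath_eq hTCK f hμ hc]
      · have : t * x = 0 := eq0 _ (by
          rw [cmul, hf, hx, ← mul_assoc, S_mul_sPath_ne hTCK f hμ hc, zero_mul])
        rw [this]; exact W.zero_mem
    · -- t = star (S f)
      cases lμ with
      | nil =>
        by_cases hc : vμ = s f
        · have hpe : pathEnd r vτ lτ = s f := by rw [← hend]; exact hc
          have hτf : IsPathFrom r s vτ (lτ ++ [f]) := isPathFrom_append_edge hτ hpe
          apply Submodule.subset_span
          refine memX _ (r f) [] vτ (lτ ++ [f]) ⟨List.isChain_nil, by simp⟩ hτf ?_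
            ⟨l ++ [f], isPathFrom_append_edge hlp (hlend.trans hc), ?_⟩ ?_
          · rw [pathEnd_append_edge]; rfl
          · rw [pathEnd_append_edge]; rfl
          · rw [cmul, hf, hx, sPath_append hTCK vτ lτ f hpe, star_mul]
            have l1 : star (S f) * sPath P S vμ [] = star (S f) := by
              show star (S f) * P vμ = star (S f)
              rw [hc, ← (h1 (s f)).star_eq, ← star_mul, Ps_mul_S hTCK]
            have l2 : sPath P S (r f) [] * star (S f) = star (S f) := by
              show P (r f) * star (S f) = star (S f)
              rw [← (h1 (r f)).star_eq, ← star_mul, S_mul_Pr hTCK]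
            rw [← mul_assoc, l1, ← mul_assoc, l2]
        · have : t * x = 0 := eq0 _ (by
            rw [cmul, hf, hx, ← mul_assoc]
            have l0 : star (S f) * sPath P S vμ [] = 0 := by
              show star (S f) * P vμ = 0
              rw [← (h1 vμ).star_eq, ← star_mul, Pu_mul_S hTCK f hc, star_zero]
            rw [l0, zero_mul])
          rw [this]; exact W.zero_mem
      | cons g lg =>
        rw [isPathFrom_cons] at hμ
        by_cases hc : f = g
        · subst hc
          apply Submodule.subset_span
          refine memX _ (r f) lg vτ lτ hμ.2 hτ ?_ ⟨l, hlp, ?_⟩ ?_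
          · rw [← pathEnd_cons f lg vμ]; exact hend
          · rw [← pathEnd_cons f lg vμ]; exact hlend
          · rw [cmul, hf, hx, sPath_cons hTCK]
            simp only [← mul_assoc]
            rw [h4 f, P_mul_sPath hTCK hμ.2]
        · have : t * x = 0 := eq0 _ (by
            rw [cmul, hf, hx, sPath_cons hTCK]
            simp only [← mul_assoc]
            rw [starS_mul_S hTCK hc, zero_mul, zero_mul])
          rw [this]; exact W.zero_mem
    · -- t = P u
      by_cases hc : u = vμ
      · apply Submodule.subset_span
        refine memX _ vμ lμ vτ lτ hμ hτ hend ⟨l, hlp, hlend⟩ ?_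
        rw [cmul, hu, hx, ← mul_assoc, hc, P_mul_sPath hTCK hμ]
      · have : t * x = 0 := eq0 _ (by
          rw [cmul, hu, hx, ← mul_assoc, P_mul_sPath_ne hTCK hμ hc, zero_mul])
        rw [this]; exact W.zero_mem
  have hGmulW : ∀ t : A.topologicalClosure,
      ((∃ f, (t : H →L[ℂ] H) = S f) ∨ (∃ f, (t : H →L[ℂ] H) = star (S f)) ∨
        (∃ u, (t : H →L[ℂ] H) = P u)) →
      ∀ x ∈ W, t * x ∈ W := by
    intro t ht x hx
    induction hx using Submodule.span_induction with
    | mem y hy => exact hGmulX t ht y hy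
    | zero => rw [mul_zero]; exact W.zero_mem
    | add y z _ _ ihy ihz => rw [mul_add]; exact W.add_mem ihy ihz
    | smul c y _ ih => rw [mul_smul_comm]; exact W.smul_mem _ ih
  have hGstar : ∀ t : A.topologicalClosure,
      ((∃ f, (t : H →L[ℂ] H) = S f) ∨ (∃ f, (t : H →L[ℂ] H) = star (S f)) ∨
        (∃ u, (t : H →L[ℂ] H) = P u)) →
      ((∃ f, ((star t : A.topologicalClosure) : H →L[ℂ] H) = S f) ∨
        (∃ f, ((star t : A.topologicalClosure) : H →L[ℂ] H) = star (S f)) ∨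
        (∃ u, ((star t : A.topologicalClosure) : H →L[ℂ] H) = P u)) := by
    rintro t (⟨f, hf⟩ | ⟨f, hf⟩ | ⟨u, hu⟩)
    · exact Or.inr (Or.inl ⟨f, by rw [cstar, hf]⟩)
    · exact Or.inl ⟨f, by rw [cstar, hf, star_star]⟩
    · exact Or.inr (Or.inr ⟨u, by rw [cstar, hu, (h1 u).star_eq]⟩)
  have hGmulWr : ∀ t : A.topologicalClosure,
      ((∃ f, (t : H →L[ℂ] H) = S f) ∨ (∃ f, (t : H →L[ℂ] H) = star (S f)) ∨
        (∃ u, (t : H →L[ℂ] H) = P u)) →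
      ∀ x ∈ W, x * t ∈ W := by
    intro t ht x hx
    have h1' := hGmulW (star t) (hGstar t ht) (star x) (hWstar x hx)
    have h2' := hWstar _ h1'
    rwa [star_mul, star_star, star_star] at h2'
  -- all of A multiplies W into W
  have hBoth : ∀ (a : H →L[ℂ] H), a ∈ A → ∀ t : A.topologicalClosure,
      (t : H →L[ℂ] H) = a → ∀ x ∈ W, t * x ∈ W ∧ x * t ∈ W := by
    intro a ha
    induction ha using NonUnitalStarAlgebra.adjoin_induction with
    | mem a ha =>
      intro t ht x hx
      rcases ha with ⟨f, hf⟩ | ⟨u, hu⟩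
      · have hg : (∃ f, (t : H →L[ℂ] H) = S f) ∨ (∃ f, (t : H →L[ℂ] H) = star (S f)) ∨
            (∃ u, (t : H →L[ℂ] H) = P u) := Or.inl ⟨f, by rw [ht, hf]⟩
        exact ⟨hGmulW t hg x hx, hGmulWr t hg x hx⟩
      · have hg : (∃ f, (t : H →L[ℂ] H) = S f) ∨ (∃ f, (t : H →L[ℂ] H) = star (S f)) ∨
            (∃ u, (t : H →L[ℂ] H) = P u) := Or.inr (Or.inr ⟨u, by rw [ht, hu]⟩)
        exact ⟨hGmulW t hg x hx, hGmulWr t hg x hx⟩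
    | add a b ha hb iha ihb =>
      intro t ht x hx
      have hta : t = (⟨a, hle ha⟩ : A.topologicalClosure) + ⟨b, hle hb⟩ :=
        Subtype.ext (by rw [ht]; rfl)
      constructor
      · rw [hta, add_mul]
        exact W.add_mem (iha ⟨a, hle ha⟩ rfl x hx).1 (ihb ⟨b, hle hb⟩ rfl x hx).1
      · rw [hta, mul_add]
        exact W.add_mem (iha ⟨a, hle ha⟩ rfl x hx).2 (ihb ⟨b, hle hb⟩ rfl x hx).2
    | zero =>
      intro t ht x hx
      have : t = 0 := eq0 t ht
      rw [this, zero_mul, mul_zero]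
      exact ⟨W.zero_mem, W.zero_mem⟩
    | mul a b ha hb iha ihb =>
      intro t ht x hx
      have hta : t = (⟨a, hle ha⟩ : A.topologicalClosure) * ⟨b, hle hb⟩ :=
        Subtype.ext (by rw [ht]; rfl)
      constructor
      · rw [hta, mul_assoc]
        exact (iha ⟨a, hle ha⟩ rfl _ ((ihb ⟨b, hle hb⟩ rfl x hx).1)).1
      · rw [hta, ← mul_assoc]
        exact (ihb ⟨b, hle hb⟩ rfl _ ((iha ⟨a, hle ha⟩ rfl x hx).2)).2
    | smul c a ha iha =>
      intro t ht x hx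
      have hta : t = c • (⟨a, hle ha⟩ : A.topologicalClosure) :=
        Subtype.ext (by rw [ht]; rfl)
      constructor
      · rw [hta, smul_mul_assoc]
        exact W.smul_mem _ (iha ⟨a, hle ha⟩ rfl x hx).1
      · rw [hta, mul_smul_comm]
        exact W.smul_mem _ (iha ⟨a, hle ha⟩ rfl x hx).2
    | star a ha iha =>
      intro t ht x hx
      have hta : t = star (⟨a, hle ha⟩ : A.topologicalClosure) :=
        Subtype.ext (by rw [ht]; rfl)
      constructor
      · rw [hta, show star (⟨a, hle ha⟩ : A.topologicalClosure) * x
            = star (star x * ⟨a, hle ha⟩) by rw [star_mul, star_star]]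
        exact hWstar _ ((iha ⟨a, hle ha⟩ rfl (star x) (hWstar x hx)).2)
      · rw [hta, show x * star (⟨a, hle ha⟩ : A.topologicalClosure)
            = star ((⟨a, hle ha⟩ : A.topologicalClosure) * star x) by rw [star_mul, star_star]]
        exact hWstar _ ((iha ⟨a, hle ha⟩ rfl (star x) (hWstar x hx)).1)
  -- density of A in its closure
  have hdense : Dense {t : A.topologicalClosure | (t : H →L[ℂ] H) ∈ A} := by
    intro t
    have ht2 : (t : H →L[ℂ] H) ∈ closure (A : Set (H →L[ℂ] H)) := t.2
    rw [mem_closure_iff_seq_limit] at ht2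
    obtain ⟨u, hu, hconv⟩ := ht2
    rw [mem_closure_iff_seq_limit]
    exact ⟨fun n => ⟨u n, hle (hu n)⟩, fun n => hu n, tendsto_subtype_rng.2 hconv⟩
  -- closure of W is stable under multiplication
  have hWc : (W.topologicalClosure : Set A.topologicalClosure) = closure (W : Set _) :=
    Submodule.topologicalClosure_coe W
  have memWc : ∀ {x : A.topologicalClosure},
      x ∈ closure (W : Set A.topologicalClosure) ↔ x ∈ W.topologicalClosure := by
    intro x
    rw [← SetLike.mem_coe, hWc]
  have hmull : ∀ x y : A.topologicalClosure, y ∈ closure (W : Set A.topologicalClosure) →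
      x * y ∈ closure (W : Set A.topologicalClosure) := by
    intro x y hy
    exact map_mem_closure₂ (f := fun a b : A.topologicalClosure => a * b)
      continuous_mul (hdense x) hy
      (fun a ha b hb => (hBoth (a : H →L[ℂ] H) ha a rfl b hb).1)
  have hmulr : ∀ x y : A.topologicalClosure, x ∈ closure (W : Set A.topologicalClosure) →
      x * y ∈ closure (W : Set A.topologicalClosure) := by
    intro x y hx
    exact map_mem_closure₂ (f := fun (a b : A.topologicalClosure) => b * a)
      (by exact continuous_snd.mul continuous_fst) (hdense y) hx
      (fun a ha b hb => (hBoth (a : H →L[ℂ] H) ha a rfl b hb).2)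
  let K : TwoSidedIdeal A.topologicalClosure :=
    TwoSidedIdeal.mk' (closure (W : Set A.topologicalClosure))
      (subset_closure W.zero_mem)
      (fun hx hy => memWc.2 (W.topologicalClosure.add_mem (memWc.1 hx) (memWc.1 hy)))
      (fun hx => memWc.2 (W.topologicalClosure.neg_mem (memWc.1 hx)))
      (fun {x y} hy => hmull x y hy)
      (fun {x y} hx => hmulr x y hx)
  have hnil : IsPathFrom r s v [] := ⟨List.isChain_nil, by simp⟩
  have hpvX : pv ∈ X := by
    refine memX pv v [] v [] hnil hnil rfl ⟨[], hnil, rfl⟩ ?_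
    rw [hpv]
    show P v = P v * star (P v)
    rw [(h1 v).star_eq, (h2 v).eq]
  show closure ((TwoSidedIdeal.span {pv} : TwoSidedIdeal A.topologicalClosure) :
      Set A.topologicalClosure) = closure (W : Set A.topologicalClosure)
  apply Set.Subset.antisymm
  · have hsub : ((TwoSidedIdeal.span {pv} : TwoSidedIdeal A.topologicalClosure) :
        Set A.topologicalClosure) ⊆ closure (W : Set A.topologicalClosure) := by
      intro x hx
      rw [SetLike.mem_coe, TwoSidedIdeal.mem_span_iff] at hx
      have hxK := hx K (by
        intro y hy
        rw [Set.mem_singleton_iff] at hy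
        subst hy
        rw [SetLike.mem_coe, TwoSidedIdeal.mem_mk']
        exact subset_closure (Submodule.subset_span hpvX))
      rwa [TwoSidedIdeal.mem_mk'] at hxK
    calc closure ((TwoSidedIdeal.span {pv} : TwoSidedIdeal A.topologicalClosure) :
          Set A.topologicalClosure)
        ⊆ closure (closure (W : Set A.topologicalClosure)) := closure_mono hsub
      _ = closure (W : Set A.topologicalClosure) := closure_closure
  · apply closure_mono
    intro x hx
    rw [SetLike.mem_coe] at hx ⊢
    suffices hs : x ∈ (TwoSidedIdeal.span {pv} : TwoSidedIdeal A.topologicalClosure) ∧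
        ∀ c : ℂ, c • x ∈ (TwoSidedIdeal.span {pv} : TwoSidedIdeal A.topologicalClosure) from hs.1
    induction hx using Submodule.span_induction with
    | mem y hy =>
      obtain ⟨vμ, lμ, vτ, lτ, hμ, hτ, hend, ⟨l, hlp, hlend⟩, hy'⟩ := hy
      have hMmem : sPath P S vμ lμ ∈ A.topologicalClosure := hle (sPath_mem hTCK hSA hPA vμ lμ)
      have hLmem : sPath P S v l ∈ A.topologicalClosure := hle (sPath_mem hTCK hSA hPA v l)
      have hNmem : sPath P S vτ lτ ∈ A.topologicalClosure := hle (sPath_mem hTCK hSA hPA vτ lτ)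
      set a : A.topologicalClosure := ⟨sPath P S vμ lμ, hMmem⟩ * star ⟨sPath P S v l, hLmem⟩
        with hadef
      set b : A.topologicalClosure := (⟨sPath P S v l, hLmem⟩ : A.topologicalClosure) *
        star ⟨sPath P S vτ lτ, hNmem⟩ with hbdef
      have hyab : y = a * pv * b := by
        apply Subtype.ext
        show (y : H →L[ℂ] H) = (sPath P S vμ lμ * star (sPath P S v l)) * (pv : H →L[ℂ] H) *
          (sPath P S v l * star (sPath P S vτ lτ))
        rw [hy', hpv]
        have e1 : P v * sPath P S v l = sPath P S v l := P_mul_sPath hTCK hlp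
        have e2 : star (sPath P S v l) * sPath P S v l = P (pathEnd r v l) :=
          star_sPath_mul_sPath hTCK hlp
        have e3 : sPath P S vμ lμ * P (pathEnd r vμ lμ) = sPath P S vμ lμ :=
          sPath_mul_Pend hTCK hμ
        calc sPath P S vμ lμ * star (sPath P S vτ lτ)
            = (sPath P S vμ lμ * P (pathEnd r vμ lμ)) * star (sPath P S vτ lτ) := by rw [e3]
          _ = (sPath P S vμ lμ * (star (sPath P S v l) * sPath P S v l)) *
              star (sPath P S vτ lτ) := by rw [e2, hlend]
          _ = (sPath P S vμ lμ * (star (sPath P S v l) * (P v * sPath P S v l))) *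
              star (sPath P S vτ lτ) := by rw [e1]
          _ = ((sPath P S vμ lμ * star (sPath P S v l)) * P v) *
              (sPath P S v l * star (sPath P S vτ lτ)) := by simp only [mul_assoc]
      have hpvI : pv ∈ (TwoSidedIdeal.span {pv} : TwoSidedIdeal A.topologicalClosure) :=
        TwoSidedIdeal.subset_span rfl
      constructor
      · rw [hyab]
        exact TwoSidedIdeal.mul_mem_right _ _ _ (TwoSidedIdeal.mul_mem_left _ _ _ hpvI)
      · intro c
        have : c • y = ((c • a) * pv) * b := by
          rw [hyab, ← smul_mul_assoc, ← smul_mul_assoc]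
        rw [this]
        exact TwoSidedIdeal.mul_mem_right _ _ _ (TwoSidedIdeal.mul_mem_left _ _ _ hpvI)
    | zero =>
      refine ⟨TwoSidedIdeal.zero_mem _, fun c => ?_⟩
      rw [smul_zero]
      exact TwoSidedIdeal.zero_mem _
    | add y z _ _ ihy ihz =>
      refine ⟨TwoSidedIdeal.add_mem _ ihy.1 ihz.1, fun c => ?_⟩
      rw [smul_add]
      exact TwoSidedIdeal.add_mem _ (ihy.2 c) (ihz.2 c)
    | smul c y _ ih =>
      refine ⟨ih.2 c, fun c' => ?_⟩
      rw [smul_smul]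
      exact ih.2 (c' * c)
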